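/- arXiv:2201.09238 — 2 statements merged into one kernel-verified Lean document; each statement's English description precedes it below -/
import Mathlib

section
/- Let d ≥ 1, q ≥ 1 and 0 < α < d. Then there exists a constant C = C(d, q, α) > 0 such that for every measurable function u : ℝ^d → ℂ and every point a ∈ ℝ^d, ∫_0^∞ ( ⨍_{B_ρ(a)} |u(y)| dy )^q ρ^{(d − α)q + d − 1} dρ ≤ C ‖ |x|^{−α} ⋆ |u| ‖_{L^q(ℝ^d)}^q, where ⨍_{B_ρ(a)} |u(y)| dy denotes the average of |u| over the ball of radius ρ centered at a. -/
open MeasureTheory Filter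
open scoped ENNReal FourierTransform

noncomputable section

abbrev Ed (d : ℕ) : Type := EuclideanSpace ℝ (Fin d)

/-- A function on `ℝ^d` is radial if its value depends only on the norm. -/
def IsRadial {d : ℕ} (f : Ed d → ℂ) : Prop :=
  ∀ x y : Ed d, ‖x‖ = ‖y‖ → f x = f y

/-- `F` is (a function representative of) the Fourier transform of `f`, in the sense of
tempered distributions: pairing `F` against any Schwartz function `g` agrees with pairing
`f` against the Fourier transform of `g` (and all pairings are given by convergent
integrals). -/
def IsFourierPair {d : ℕ} (f F : Ed d → ℂ) : Prop :=
  ∀ g : SchwartzMap (Ed d) ℂ,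
    Integrable (fun x : Ed d => f x * 𝓕 (fun y : Ed d => g y) x) volume ∧
    Integrable (fun x : Ed d => F x * g x) volume ∧
    ∫ x : Ed d, F x * g x = ∫ x : Ed d, f x * 𝓕 (fun y : Ed d => g y) x

/-- `u = D^s f`, i.e. the (distributional) Fourier transform of `u` is
`‖ξ‖ ^ s` times the Fourier transform of `f`. -/
def IsDpow {d : ℕ} (s : ℝ) (f u : Ed d → ℂ) : Prop :=
  ∃ F : Ed d → ℂ,
    IsFourierPair f F ∧ IsFourierPair u (fun ξ : Ed d => ((‖ξ‖ ^ s : ℝ) : ℂ) * F ξ)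

/-- A complex-valued function is (a.e.) nonnegative real. -/
def AENonneg {d : ℕ} (u : Ed d → ℂ) : Prop :=
  ∀ᵐ x : Ed d ∂volume, 0 ≤ (u x).re ∧ (u x).im = 0

/-- The Riesz-type convolution `(|x|^{-α} ⋆ |u|)(x)`. -/
def rieszConv {d : ℕ} (α : ℝ) (u : Ed d → ℂ) (x : Ed d) : ℝ≥0∞ :=
  ∫⁻ y : Ed d, (‖u y‖₊ : ℝ≥0∞) / ENNReal.ofReal (‖x - y‖ ^ α)

/-- The `L^q` norm of the Riesz-type convolution `|x|^{-α} ⋆ |u|`. -/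
def rieszNorm {d : ℕ} (α q : ℝ) (u : Ed d → ℂ) : ℝ≥0∞ :=
  (∫⁻ x : Ed d, rieszConv α u x ^ q) ^ (1 / q)

/-- The homogeneous Sobolev norm `‖D^s f‖_{L²}` computed on the Fourier side (Plancherel):
`(∫ ‖ξ‖^{2s} ‖F ξ‖² dξ)^{1/2}` where `F = 𝓕 f`. -/
def fracNorm {d : ℕ} (s : ℝ) (F : Ed d → ℂ) : ℝ≥0∞ :=
  (∫⁻ ξ : Ed d, ENNReal.ofReal (‖ξ‖ ^ (2 * s)) * (‖F ξ‖₊ : ℝ≥0∞) ^ (2 : ℝ)) ^ (1 / (2 : ℝ))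


lemma aux_real (d : ℕ) (q α t ρ : ℝ) (ht : 0 < t) (hρ : 0 < ρ) :
    ((ρ ^ d * t)⁻¹) ^ q * ρ ^ (((d : ℝ) - α) * q + (d : ℝ) - 1) * (ρ ^ d * t)⁻¹ *
        ((3 * ρ) ^ α) ^ q
      = (3 ^ (α * q) * (t⁻¹) ^ q * t⁻¹) * ρ⁻¹ := by
  have h1 : (ρ ^ d * t)⁻¹ = ρ ^ (-(d : ℝ)) * t⁻¹ := by
    rw [mul_inv, ← Real.rpow_natCast ρ d, ← Real.rpow_neg hρ.le]
  have h2 : ((3 * ρ) ^ α) ^ q = 3 ^ (α * q) * ρ ^ (α * q) := by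
    rw [← Real.rpow_mul (by positivity : (0:ℝ) ≤ 3 * ρ),
      Real.mul_rpow (by norm_num) hρ.le]
  have h3 : (ρ ^ (-(d : ℝ)) * t⁻¹) ^ q = ρ ^ (-(d : ℝ) * q) * (t⁻¹) ^ q := by
    rw [Real.mul_rpow (by positivity) (by positivity), ← Real.rpow_mul hρ.le]
  rw [h1, h3, h2]
  have h4 : ρ ^ (-(d : ℝ) * q) * ρ ^ (((d : ℝ) - α) * q + (d : ℝ) - 1) * ρ ^ (-(d : ℝ)) *
      ρ ^ (α * q) = ρ⁻¹ := by
    rw [← Real.rpow_add hρ, ← Real.rpow_add hρ, ← Real.rpow_add hρ,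
      show -(d : ℝ) * q + (((d : ℝ) - α) * q + (d : ℝ) - 1) + -(d : ℝ) + α * q = -1 by ring,
      Real.rpow_neg_one]
  calc ρ ^ (-(d : ℝ) * q) * (t⁻¹) ^ q * ρ ^ (((d : ℝ) - α) * q + (d : ℝ) - 1) *
        (ρ ^ (-(d : ℝ)) * t⁻¹) * (3 ^ (α * q) * ρ ^ (α * q))
      = (3 ^ (α * q) * (t⁻¹) ^ q * t⁻¹) *
        (ρ ^ (-(d : ℝ) * q) * ρ ^ (((d : ℝ) - α) * q + (d : ℝ) - 1) * ρ ^ (-(d : ℝ)) *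
          ρ ^ (α * q)) := by ring
    _ = (3 ^ (α * q) * (t⁻¹) ^ q * t⁻¹) * ρ⁻¹ := by rw [h4]


/-- Lemma `lem:important`: bound for averages on balls in terms of the
`L^q` norm of the Riesz potential. -/
theorem statement9 (d : ℕ) (hd : 1 ≤ d) (q α : ℝ)
    (hq : 1 ≤ q) (hα1 : 0 < α) (hα2 : α < (d : ℝ)) :
    ∃ C : ℝ, 0 < C ∧
      ∀ u : Ed d → ℂ, Measurable u → ∀ a : Ed d,
        (∫⁻ ρ in Set.Ioi (0 : ℝ),
            ((volume (Metric.ball a ρ))⁻¹ * ∫⁻ y in Metric.ball a ρ, (‖u y‖₊ : ℝ≥0∞)) ^ q *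
              ENNReal.ofReal (ρ ^ (((d : ℝ) - α) * q + (d : ℝ) - 1))) ≤
          ENNReal.ofReal C * rieszNorm α q u ^ q := by
  classical
  haveI : Nontrivial (Ed d) := by
    apply Module.nontrivial_of_finrank_pos (R := ℝ)
    rw [finrank_euclideanSpace_fin]
    exact hd
  have hq0 : 0 < q := lt_of_lt_of_le one_pos hq
  set t : ℝ := (volume (Metric.ball (0 : Ed d) 1)).toReal with ht_def
  have hballpos : 0 < volume (Metric.ball (0 : Ed d) 1) := Metric.measure_ball_pos _ _ one_pos
  have hballlt : volume (Metric.ball (0 : Ed d) 1) < ⊤ := measure_ball_lt_top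
  have ht : 0 < t := ENNReal.toReal_pos hballpos.ne' hballlt.ne
  have hc1 : volume (Metric.ball (0 : Ed d) 1) = ENNReal.ofReal t :=
    (ENNReal.ofReal_toReal hballlt.ne).symm
  set C : ℝ := 3 ^ (α * q) * (t⁻¹) ^ q * t⁻¹ with hC_def
  have hC : 0 < C := by positivity
  refine ⟨C, hC, ?_⟩
  intro u hu a
  set β : ℝ := ((d : ℝ) - α) * q + (d : ℝ) - 1 with hβ_def
  -- measurability of the convolution
  have hker : Measurable (fun p : Ed d × Ed d =>
      (‖u p.2‖₊ : ℝ≥0∞) / ENNReal.ofReal (‖p.1 - p.2‖ ^ α)) := by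
    apply Measurable.div
    · exact (measurable_coe_nnreal_ennreal.comp ((hu.comp measurable_snd).nnnorm))
    · exact ENNReal.measurable_ofReal.comp
        (((continuous_fst.sub continuous_snd).norm.rpow_const
          (fun x => Or.inr hα1.le)).measurable)
  have hconv : Measurable (rieszConv α u) := hker.lintegral_prod_right'
  set F : Ed d → ℝ≥0∞ := fun x => rieszConv α u x ^ q with hF_def
  have hF : Measurable F := ENNReal.continuous_rpow_const.measurable.comp hconv
  -- the product kernel
  set T : Set (ℝ × Ed d) := {p | p.1 < ‖p.2 - a‖ ∧ ‖p.2 - a‖ < 2 * p.1} with hT_def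
  have hT : MeasurableSet T := by
    have hn : Measurable fun p : ℝ × Ed d => ‖p.2 - a‖ :=
      ((continuous_snd.sub continuous_const).norm).measurable
    exact (measurableSet_lt measurable_fst hn).inter
      (measurableSet_lt hn (measurable_fst.const_mul 2))
  set P : ℝ × Ed d → ℝ≥0∞ :=
    T.indicator (fun p => ENNReal.ofReal p.1⁻¹ * F p.2) with hP_def
  have hP : Measurable P :=
    ((ENNReal.measurable_ofReal.comp measurable_fst.inv).mul (hF.comp measurable_snd)).indicator hT
  -- key pointwise (in ρ) estimate
  have key : ∀ ρ ∈ Set.Ioi (0 : ℝ),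
      ((volume (Metric.ball a ρ))⁻¹ * ∫⁻ y in Metric.ball a ρ, (‖u y‖₊ : ℝ≥0∞)) ^ q *
          ENNReal.ofReal (ρ ^ β) ≤
        ENNReal.ofReal C * ∫⁻ x, P (ρ, x) := by
    intro ρ hρ
    rw [Set.mem_Ioi] at hρ
    set M : ℝ≥0∞ := ∫⁻ y in Metric.ball a ρ, (‖u y‖₊ : ℝ≥0∞) with hM_def
    have hdim : Module.finrank ℝ (Ed d) = d := finrank_euclideanSpace_fin
    have hVball : volume (Metric.ball a ρ) = ENNReal.ofReal (ρ ^ d * t) := by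
      rw [Measure.addHaar_ball volume a hρ.le, hdim, hc1,
        ← ENNReal.ofReal_mul (by positivity)]
    set c3 : ℝ≥0∞ := ENNReal.ofReal ((3 * ρ) ^ α) with hc3_def
    have hc3_0 : c3 ≠ 0 := by
      rw [hc3_def]
      exact (ENNReal.ofReal_pos.2 (Real.rpow_pos_of_pos (by linarith) _)).ne'
    have hc3_top : c3 ≠ ⊤ := ENNReal.ofReal_ne_top
    set S : Set (Ed d) := {x | ρ < ‖x - a‖ ∧ ‖x - a‖ < 2 * ρ} with hS_def
    have hSmeas : MeasurableSet S := by
      have hn : Measurable fun x : Ed d => ‖x - a‖ :=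
        ((continuous_id.sub continuous_const).norm).measurable
      exact (measurableSet_lt measurable_const hn).inter
        (measurableSet_lt hn measurable_const)
    have step1 : ∀ x ∈ S, M * c3⁻¹ ≤ rieszConv α u x := by
      intro x hx
      have hxball : ∀ y ∈ Metric.ball a ρ, ‖x - y‖ ≤ 3 * ρ := by
        intro y hy
        have h2 : dist y a < ρ := Metric.mem_ball.1 hy
        calc ‖x - y‖ = dist x y := (dist_eq_norm x y).symm
          _ ≤ dist x a + dist a y := dist_triangle x a y
          _ ≤ 2 * ρ + ρ := by
              rw [dist_comm a y, dist_eq_norm]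
              exact add_le_add hx.2.le h2.le
          _ = 3 * ρ := by ring
      have hgmeas : Measurable fun y : Ed d =>
          (‖u y‖₊ : ℝ≥0∞) / ENNReal.ofReal (‖x - y‖ ^ α) := by
        apply Measurable.div
        · exact measurable_coe_nnreal_ennreal.comp hu.nnnorm
        · exact ENNReal.measurable_ofReal.comp
            (((continuous_const.sub continuous_id).norm.rpow_const
              (fun _ => Or.inr hα1.le)).measurable)
      calc M * c3⁻¹ = ∫⁻ y in Metric.ball a ρ, (‖u y‖₊ : ℝ≥0∞) * c3⁻¹ :=
          (lintegral_mul_const' _ _ (by simpa using hc3_0)).symm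
        _ ≤ ∫⁻ y in Metric.ball a ρ,
              (‖u y‖₊ : ℝ≥0∞) / ENNReal.ofReal (‖x - y‖ ^ α) := by
            refine setLIntegral_mono hgmeas (fun y hy => ?_)
            rw [div_eq_mul_inv]
            refine mul_le_mul_right (ENNReal.inv_le_inv.2 ?_) _
            exact ENNReal.ofReal_le_ofReal
              (Real.rpow_le_rpow (norm_nonneg _) (hxball y hy) hα1.le)
        _ ≤ rieszConv α u x := setLIntegral_le_lintegral _ _
    have hvolS : ENNReal.ofReal (ρ ^ d * t) ≤ volume S := by
      have hS_eq : S = Metric.ball a (2 * ρ) \ Metric.closedBall a ρ := by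
        ext x
        constructor
        · rintro ⟨h1, h2⟩
          refine ⟨Metric.mem_ball.2 ?_, fun hc => ?_⟩
          · rw [dist_eq_norm]; exact h2
          · rw [Metric.mem_closedBall, dist_eq_norm] at hc
            exact absurd h1 (not_lt.2 hc)
        · rintro ⟨h1, h2⟩
          rw [Metric.mem_ball, dist_eq_norm] at h1
          rw [Metric.mem_closedBall, dist_eq_norm, not_le] at h2
          exact ⟨h2, h1⟩
      rw [hS_eq, measure_diff (Metric.closedBall_subset_ball (by linarith))
          measurableSet_closedBall.nullMeasurableSet
          measure_closedBall_lt_top.ne,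
        Measure.addHaar_ball volume a (by linarith : (0:ℝ) ≤ 2 * ρ),
        Measure.addHaar_closedBall volume a hρ.le, hdim, hc1,
        ← ENNReal.ofReal_mul (by positivity), ← ENNReal.ofReal_mul (by positivity),
        ← ENNReal.ofReal_sub _ (by positivity)]
      apply ENNReal.ofReal_le_ofReal
      have h2d : (2:ℝ) ≤ 2 ^ d := by
        calc (2:ℝ) = 2 ^ 1 := (pow_one 2).symm
          _ ≤ 2 ^ d := pow_le_pow_right₀ one_le_two hd
      have hmp : (2 * ρ) ^ d = 2 ^ d * ρ ^ d := mul_pow 2 ρ d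
      have hρd : (0:ℝ) < ρ ^ d := by positivity
      nlinarith [mul_pos hρd ht]
    have hVS : (M * c3⁻¹) ^ q * ENNReal.ofReal (ρ ^ d * t) ≤ ∫⁻ x in S, F x := by
      calc (M * c3⁻¹) ^ q * ENNReal.ofReal (ρ ^ d * t)
          ≤ (M * c3⁻¹) ^ q * volume S := mul_le_mul_right hvolS _
        _ = ∫⁻ _ in S, (M * c3⁻¹) ^ q := (setLIntegral_const S _).symm
        _ ≤ ∫⁻ x in S, F x :=
            setLIntegral_mono hF (fun x hx => ENNReal.rpow_le_rpow (step1 x hx) hq0.le)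
    have hMqV : M ^ q * ENNReal.ofReal (ρ ^ d * t) ≤ c3 ^ q * ∫⁻ x in S, F x := by
      have hM' : M = M * c3⁻¹ * c3 := by
        rw [mul_assoc, ENNReal.inv_mul_cancel hc3_0 hc3_top, mul_one]
      calc M ^ q * ENNReal.ofReal (ρ ^ d * t)
          = ((M * c3⁻¹) ^ q * c3 ^ q) * ENNReal.ofReal (ρ ^ d * t) := by
            rw [← ENNReal.mul_rpow_of_nonneg _ _ hq0.le, ← hM']
        _ = c3 ^ q * ((M * c3⁻¹) ^ q * ENNReal.ofReal (ρ ^ d * t)) := by ring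
        _ ≤ c3 ^ q * ∫⁻ x in S, F x := mul_le_mul_right hVS _
    have hPx : (∫⁻ x, P (ρ, x)) = ENNReal.ofReal ρ⁻¹ * ∫⁻ x in S, F x := by
      have hfe : (fun x => P (ρ, x)) = S.indicator (fun x => ENNReal.ofReal ρ⁻¹ * F x) := by
        funext x
        by_cases h : x ∈ S
        · have hT' : (ρ, x) ∈ T := h
          rw [hP_def, Set.indicator_of_mem hT', Set.indicator_of_mem h]
        · have hT' : (ρ, x) ∉ T := h
          rw [hP_def, Set.indicator_of_notMem hT', Set.indicator_of_notMem h]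
      rw [hfe, lintegral_indicator hSmeas,
        lintegral_const_mul' _ _ ENNReal.ofReal_ne_top]
    set V : ℝ≥0∞ := ENNReal.ofReal (ρ ^ d * t) with hV_def
    have hV0 : V ≠ 0 := by
      rw [hV_def]; exact (ENNReal.ofReal_pos.2 (by positivity)).ne'
    have hVtop : V ≠ ⊤ := ENNReal.ofReal_ne_top
    have hVV : V⁻¹ * V = 1 := ENNReal.inv_mul_cancel hV0 hVtop
    have hbracket : V⁻¹ ^ q * ENNReal.ofReal (ρ ^ β) * V⁻¹ * c3 ^ q
        = ENNReal.ofReal C * ENNReal.ofReal ρ⁻¹ := by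
      rw [hV_def, hc3_def, ← ENNReal.ofReal_inv_of_pos (by positivity),
        ENNReal.ofReal_rpow_of_pos (by positivity),
        ENNReal.ofReal_rpow_of_pos (by positivity),
        ← ENNReal.ofReal_mul (by positivity), ← ENNReal.ofReal_mul (by positivity),
        ← ENNReal.ofReal_mul (by positivity), ← ENNReal.ofReal_mul hC.le]
      exact congrArg ENNReal.ofReal (by rw [hC_def, hβ_def]; exact aux_real d q α t ρ ht hρ)
    calc ((volume (Metric.ball a ρ))⁻¹ * M) ^ q * ENNReal.ofReal (ρ ^ β)
        = V⁻¹ ^ q * M ^ q * ENNReal.ofReal (ρ ^ β) := by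
          rw [hVball, ENNReal.mul_rpow_of_nonneg _ _ hq0.le]
      _ = V⁻¹ ^ q * M ^ q * ENNReal.ofReal (ρ ^ β) * (V⁻¹ * V) := by rw [hVV, mul_one]
      _ = (V⁻¹ ^ q * ENNReal.ofReal (ρ ^ β) * V⁻¹) * (M ^ q * V) := by ring
      _ ≤ (V⁻¹ ^ q * ENNReal.ofReal (ρ ^ β) * V⁻¹) * (c3 ^ q * ∫⁻ x in S, F x) :=
          mul_le_mul_right hMqV _
      _ = (V⁻¹ ^ q * ENNReal.ofReal (ρ ^ β) * V⁻¹ * c3 ^ q) * ∫⁻ x in S, F x := by ring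
      _ = (ENNReal.ofReal C * ENNReal.ofReal ρ⁻¹) * ∫⁻ x in S, F x := by rw [hbracket]
      _ = ENNReal.ofReal C * ∫⁻ x, P (ρ, x) := by rw [hPx]; ring
  -- inner ρ-integral bound
  have inner_le : ∀ x : Ed d, (∫⁻ ρ in Set.Ioi (0 : ℝ), P (ρ, x)) ≤ F x := by
    intro x
    set r : ℝ := ‖x - a‖ with hr_def
    have hfun : (fun ρ => P (ρ, x)) =
        (Set.Ioo (r / 2) r).indicator (fun ρ => ENNReal.ofReal ρ⁻¹ * F x) := by
      funext ρ
      have hiff : ((ρ, x) ∈ T) ↔ ρ ∈ Set.Ioo (r / 2) r := by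
        simp only [hT_def, Set.mem_setOf_eq, Set.mem_Ioo, ← hr_def]
        constructor
        · rintro ⟨h1, h2⟩; exact ⟨by linarith, h1⟩
        · rintro ⟨h1, h2⟩; exact ⟨h2, by linarith⟩
      by_cases h : (ρ, x) ∈ T
      · rw [hP_def, Set.indicator_of_mem h, Set.indicator_of_mem (hiff.1 h)]
      · rw [hP_def, Set.indicator_of_notMem h,
          Set.indicator_of_notMem (fun hc => h (hiff.2 hc))]
    have hIoo : (∫⁻ ρ in Set.Ioo (r / 2) r, ENNReal.ofReal ρ⁻¹ * F x) ≤ F x := by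
      by_cases hr : 0 < r
      · calc (∫⁻ ρ in Set.Ioo (r / 2) r, ENNReal.ofReal ρ⁻¹ * F x)
            ≤ ∫⁻ _ in Set.Ioo (r / 2) r, ENNReal.ofReal (2 / r) * F x := by
              refine setLIntegral_mono' measurableSet_Ioo (fun ρ hρ => ?_)
              refine mul_le_mul_left (ENNReal.ofReal_le_ofReal ?_) _
              have h1 : (0:ℝ) < r / 2 := by linarith
              calc ρ⁻¹ ≤ (r / 2)⁻¹ := inv_anti₀ h1 hρ.1.le
                _ = 2 / r := by rw [inv_div]
          _ = ENNReal.ofReal (2 / r) * F x * volume (Set.Ioo (r / 2) r) :=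
              setLIntegral_const _ _
          _ = F x * (ENNReal.ofReal (2 / r) * ENNReal.ofReal (r / 2)) := by
              rw [Real.volume_Ioo, show r - r / 2 = r / 2 by ring]; ring
          _ = F x := by
              rw [← ENNReal.ofReal_mul (by positivity),
                show 2 / r * (r / 2) = 1 by field_simp, ENNReal.ofReal_one, mul_one]
      · have he : Set.Ioo (r / 2) r = ∅ :=
          Set.Ioo_eq_empty (fun hc => hr (by linarith))
        simp [he]
    calc (∫⁻ ρ in Set.Ioi (0 : ℝ), P (ρ, x)) ≤ ∫⁻ ρ, P (ρ, x) :=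
        setLIntegral_le_lintegral _ _
      _ = ∫⁻ ρ in Set.Ioo (r / 2) r, ENNReal.ofReal ρ⁻¹ * F x := by
          rw [hfun, lintegral_indicator measurableSet_Ioo]
      _ ≤ F x := hIoo
  have hnorm : (∫⁻ x, F x) = rieszNorm α q u ^ q := by
    rw [rieszNorm, ← ENNReal.rpow_mul, one_div_mul_cancel hq0.ne', ENNReal.rpow_one]
  calc (∫⁻ ρ in Set.Ioi (0 : ℝ),
          ((volume (Metric.ball a ρ))⁻¹ * ∫⁻ y in Metric.ball a ρ, (‖u y‖₊ : ℝ≥0∞)) ^ q *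
            ENNReal.ofReal (ρ ^ β))
      ≤ ∫⁻ ρ in Set.Ioi (0 : ℝ), ENNReal.ofReal C * ∫⁻ x, P (ρ, x) :=
        setLIntegral_mono' measurableSet_Ioi key
    _ = ENNReal.ofReal C * ∫⁻ ρ in Set.Ioi (0 : ℝ), ∫⁻ x, P (ρ, x) :=
        lintegral_const_mul' _ _ ENNReal.ofReal_ne_top
    _ = ENNReal.ofReal C * ∫⁻ x, ∫⁻ ρ in Set.Ioi (0 : ℝ), P (ρ, x) := by
        rw [lintegral_lintegral_swap (f := fun ρ x => P (ρ, x)) (by exact hP.aemeasurable)]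
    _ ≤ ENNReal.ofReal C * ∫⁻ x, F x := by
        gcongr with x
        exact inner_le x
    _ = ENNReal.ofReal C * rieszNorm α q u ^ q := by rw [hnorm]

end
end

section
/- Let d ≥ 2, b ∈ (−d + 1, 0) and γ > d − 1. Then there exists a constant C = C(d, b, γ) > 0 such that for every radial function f on ℝ^d with ∫_{ℝ^d} |y|^{b} |f(y)| dy < ∞ and every x ≠ 0, | ∫_{ℝ^d} f(y) (1 + |x − y|^2)^{−γ/2} dy | ≤ C |x|^{−(d − 1 + b)} ∫_{ℝ^d} |y|^{b} |f(y)| dy. -/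
open MeasureTheory Filter
open scoped ENNReal FourierTransform

noncomputable section

open Metric Set in
private lemma exists_iso {d : ℕ} {x z : Ed d} (h : ‖x‖ = ‖z‖) :
    ∃ e : Ed d ≃ₗᵢ[ℝ] Ed d, e x = z := by
  by_cases hxz : x = z
  · exact ⟨LinearIsometryEquiv.refl ℝ (Ed d), by rw [hxz]; simp⟩
  · exact ⟨Submodule.reflection (ℝ ∙ (x - z))ᗮ, Submodule.reflection_sub h⟩

open Metric Set in
private lemma cap_bound {d : ℕ} (hd : 2 ≤ d) {R t : ℝ} (hR : 0 < R) (ht : 0 < t) (y : Ed d) :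
    (volume : Measure (Ed d)).toSphere {u : Metric.sphere (0:Ed d) 1 | ‖R • (u : Ed d) - y‖ ≤ t}
      ≤ ENNReal.ofReal
          ((volume (Metric.closedBall (0:Ed d) 1)).toReal * 2 ^ d * (t / R) ^ (d - 1)) := by
  classical
  have hd0 : 0 < d := by omega
  set μ : Measure (Ed d) := volume with hμ
  have hdim : Module.finrank ℝ (Ed d) = d := finrank_euclideanSpace_fin
  set C : Set (Metric.sphere (0:Ed d) 1) := {u | ‖R • (u : Ed d) - y‖ ≤ t} with hCdef
  have hCmeas : MeasurableSet C := by
    have hcont : Continuous fun u : Metric.sphere (0:Ed d) 1 => ‖R • (u : Ed d) - y‖ := by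
      fun_prop
    exact (isClosed_le hcont continuous_const).measurableSet
  set S' : Set (Ioi (0:ℝ)) := Subtype.val ⁻¹' (Ioc R (R + t)) with hS'def
  have hS'meas : MeasurableSet S' := measurable_subtype_coe measurableSet_Ioc
  set ν := Measure.volumeIoiPow (Module.finrank ℝ (Ed d) - 1) with hν
  have hT := Measure.measurePreserving_homeomorphUnitSphereProd μ
  have h2 : (μ.comap Subtype.val) ((homeomorphUnitSphereProd (Ed d)) ⁻¹' (C ×ˢ S'))
      = μ.toSphere C * ν S' := by
    rw [hT.measure_preimage (hCmeas.prod hS'meas).nullMeasurableSet, Measure.prod_prod]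
  have h3 : (μ.comap Subtype.val) ((homeomorphUnitSphereProd (Ed d)) ⁻¹' (C ×ˢ S'))
      = μ (Subtype.val '' ((homeomorphUnitSphereProd (Ed d)) ⁻¹' (C ×ˢ S'))) := by
    rw [comap_subtype_coe_apply (measurableSet_singleton (0:Ed d)).compl]
  -- the image is inside a ball
  have h4 : (Subtype.val '' ((homeomorphUnitSphereProd (Ed d)) ⁻¹' (C ×ˢ S')))
      ⊆ Metric.closedBall y (2 * t) := by
    rintro w ⟨w', hw', rfl⟩
    rw [Set.mem_preimage, Set.mem_prod] at hw'
    obtain ⟨hw1, hw2⟩ := hw'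
    have hwne : (w' : Ed d) ≠ 0 := w'.2
    have hwnorm : ‖(w' : Ed d)‖ ∈ Ioc R (R + t) := by simpa [hS'def] using hw2
    have hwpos : (0:ℝ) < ‖(w' : Ed d)‖ := norm_pos_iff.2 hwne
    have hcap : ‖R • (‖(w' : Ed d)‖⁻¹ • (w' : Ed d)) - y‖ ≤ t := by simpa [hCdef] using hw1
    have key : ‖(w' : Ed d) - R • (‖(w' : Ed d)‖⁻¹ • (w' : Ed d))‖ = ‖(w' : Ed d)‖ - R := by
      rw [smul_smul]
      nth_rewrite 1 [show (w' : Ed d) = (1:ℝ) • (w' : Ed d) from (one_smul ℝ _).symm]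
      rw [← sub_smul, norm_smul, Real.norm_eq_abs, abs_of_nonneg, sub_mul, one_mul,
        mul_assoc, inv_mul_cancel₀ hwpos.ne', mul_one]
      have : R / ‖(w' : Ed d)‖ ≤ 1 := by
        rw [div_le_one hwpos]; exact hwnorm.1.le
      rw [← div_eq_mul_inv]; linarith
    rw [Metric.mem_closedBall, dist_eq_norm]
    calc ‖(w' : Ed d) - y‖
        ≤ ‖(w' : Ed d) - R • (‖(w' : Ed d)‖⁻¹ • (w' : Ed d))‖
          + ‖R • (‖(w' : Ed d)‖⁻¹ • (w' : Ed d)) - y‖ := by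
          simpa using norm_sub_le_norm_sub_add_norm_sub (w' : Ed d)
            (R • (‖(w' : Ed d)‖⁻¹ • (w' : Ed d))) y
    _ ≤ t + t := by
        refine add_le_add ?_ hcap
        rw [key]; linarith [hwnorm.2]
    _ = 2 * t := by ring
  -- volume of closed ball
  have h5 : μ (Metric.closedBall y (2 * t))
      = ENNReal.ofReal ((2*t) ^ d) * μ (Metric.closedBall (0:Ed d) 1) := by
    rw [Measure.addHaar_closedBall' μ y (by positivity : (0:ℝ) ≤ 2*t), hdim]
  -- lower bound for ν S'
  have h6 : ENNReal.ofReal (R ^ (d-1) * t) ≤ ν S' := by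
    rw [hν, Measure.volumeIoiPow, withDensity_apply _ hS'meas,
      setLIntegral_subtype measurableSet_Ioi _ (fun a : ℝ => ENNReal.ofReal (a ^ (Module.finrank ℝ (Ed d) - 1)))]
    have himg : (Subtype.val '' S') = Ioc R (R + t) := by
      rw [hS'def, Subtype.image_preimage_coe]
      exact inter_eq_right.2 (fun a ha => lt_trans hR ha.1)
    rw [himg]
    calc ENNReal.ofReal (R ^ (d-1) * t)
        = ∫⁻ _ in Ioc R (R+t), ENNReal.ofReal (R ^ (d-1)) := by
          rw [setLIntegral_const, Real.volume_Ioc, show R + t - R = t by ring,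
            ← ENNReal.ofReal_mul (by positivity)]
    _ ≤ ∫⁻ a in Ioc R (R+t), ENNReal.ofReal (a ^ (Module.finrank ℝ (Ed d) - 1)) := by
          refine setLIntegral_mono (by fun_prop) ?_
          intro a ha
          rw [hdim]
          exact ENNReal.ofReal_le_ofReal (pow_le_pow_left₀ hR.le ha.1.le _)
  have hV : μ (Metric.closedBall (0:Ed d) 1)
      = ENNReal.ofReal ((μ (Metric.closedBall (0:Ed d) 1)).toReal) := by
    rw [ENNReal.ofReal_toReal measure_closedBall_lt_top.ne]
  have hreal : (2*t) ^ d * (μ (Metric.closedBall (0:Ed d) 1)).toReal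
      = ((μ (Metric.closedBall (0:Ed d) 1)).toReal * 2 ^ d * (t / R) ^ (d - 1)) * (R ^ (d-1) * t) := by
    have hd1 : d - 1 + 1 = d := Nat.succ_pred_eq_of_pos hd0
    have h2p : (2*t)^d = 2^d * t^d := by rw [mul_pow]
    rw [h2p, div_pow]
    have ht' : t ^ d = t ^ (d-1) * t := by rw [← pow_succ, hd1]
    field_simp
    rw [ht']
    ring
  have hBpos : ENNReal.ofReal (R ^ (d-1) * t) ≠ 0 := (ENNReal.ofReal_pos.2 (by positivity)).ne'
  calc μ.toSphere C
      ≤ ENNReal.ofReal (((μ (Metric.closedBall (0:Ed d) 1)).toReal * 2 ^ d * (t / R) ^ (d - 1))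
          * (R ^ (d-1) * t)) / ENNReal.ofReal (R ^ (d-1) * t) := by
        rw [ENNReal.le_div_iff_mul_le (Or.inl hBpos) (Or.inl ENNReal.ofReal_ne_top)]
        calc μ.toSphere C * ENNReal.ofReal (R ^ (d-1) * t)
            ≤ μ.toSphere C * ν S' := mul_le_mul_right h6 _
        _ = μ (Subtype.val '' ((homeomorphUnitSphereProd (Ed d)) ⁻¹' (C ×ˢ S'))) := by
            rw [← h2, h3]
        _ ≤ μ (Metric.closedBall y (2 * t)) := measure_mono h4
        _ = ENNReal.ofReal ((2*t) ^ d * (μ (Metric.closedBall (0:Ed d) 1)).toReal) := by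
            rw [h5, ENNReal.ofReal_mul (by positivity), ← hV]
        _ = _ := by rw [hreal]
  _ = ENNReal.ofReal ((μ (Metric.closedBall (0:Ed d) 1)).toReal * 2 ^ d * (t / R) ^ (d - 1)) := by
      rw [ENNReal.ofReal_mul (by positivity), mul_div_assoc,
        ENNReal.div_self hBpos ENNReal.ofReal_ne_top, mul_one]

open Metric Set in
private lemma sphere_int_bound {d : ℕ} (hd : 2 ≤ d) {γ : ℝ} (hγ : (d:ℝ) - 1 < γ) :
    ∃ C₁ : ℝ, 0 < C₁ ∧ ∀ R : ℝ, 0 < R → ∀ y : Ed d,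
      (∫⁻ u : Metric.sphere (0:Ed d) 1,
          ENNReal.ofReal ((1 + ‖R • (u:Ed d) - y‖ ^ 2) ^ (-(γ/2)))
          ∂(volume : Measure (Ed d)).toSphere)
        ≤ ENNReal.ofReal (C₁ * (1/R) ^ (d-1)) := by
  classical
  have hd1R : (1:ℝ) ≤ (d:ℝ) - 1 := by
    have : (2:ℝ) ≤ (d:ℝ) := by exact_mod_cast hd
    linarith
  have hγ0 : 0 < γ := by linarith
  set V : ℝ := (volume (Metric.closedBall (0:Ed d) 1)).toReal with hVdef
  have hV0 : 0 < V := by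
    refine ENNReal.toReal_pos ?_ measure_closedBall_lt_top.ne
    exact ((measure_ball_pos volume (0:Ed d) one_pos).trans_le
      (measure_mono ball_subset_closedBall)).ne'
  set V2d : ℝ := V * 2 ^ d with hV2d
  have hV2d0 : 0 < V2d := by positivity
  set q : ℝ := 2 ^ ((d:ℝ) - 1 - γ) with hqdef
  have hq0 : 0 < q := Real.rpow_pos_of_pos two_pos _
  have hq1 : q < 1 := Real.rpow_lt_one_of_one_lt_of_neg one_lt_two (by linarith)
  set x : ℝ := (2:ℝ) ^ (-γ) with hxdef
  have hx0 : 0 < x := Real.rpow_pos_of_pos two_pos _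
  have hcast : ((d - 1 : ℕ) : ℝ) = (d:ℝ) - 1 := by
    rw [Nat.cast_sub (by omega)]; norm_num
  have hq_eq : q = x * 2 ^ (d - 1) := by
    rw [hqdef, hxdef, ← Real.rpow_natCast (2:ℝ) (d-1), ← Real.rpow_add two_pos, hcast]
    ring_nf
  refine ⟨2 ^ γ * (V2d * (1 - q)⁻¹),
    mul_pos (Real.rpow_pos_of_pos two_pos γ) (mul_pos hV2d0 (inv_pos.2 (by linarith))), ?_⟩
  intro R hR y
  set A : ℕ → Set (Metric.sphere (0:Ed d) 1) :=
    fun j => {u | ‖R • (u : Ed d) - y‖ ≤ 2 ^ j} with hAdef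
  have hAmeas : ∀ j, MeasurableSet (A j) := by
    intro j
    have hcont : Continuous fun u : Metric.sphere (0:Ed d) 1 => ‖R • (u : Ed d) - y‖ := by
      fun_prop
    exact (isClosed_le hcont continuous_const).measurableSet
  -- pointwise dyadic bound
  have hpt : ∀ u : Metric.sphere (0:Ed d) 1,
      ENNReal.ofReal ((1 + ‖R • (u:Ed d) - y‖ ^ 2) ^ (-(γ/2)))
        ≤ ∑' j : ℕ, (A j).indicator
            (fun _ => ENNReal.ofReal (2 ^ γ) * ENNReal.ofReal x ^ j) u := by
    intro u
    set s : ℝ := ‖R • (u:Ed d) - y‖ with hsdef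
    have hs0 : 0 ≤ s := norm_nonneg _
    have hex : ∃ m : ℕ, s ≤ 2 ^ m := by
      obtain ⟨n, hn⟩ := pow_unbounded_of_one_lt s one_lt_two
      exact ⟨n, hn.le⟩
    set J := Nat.find hex with hJdef
    have hJ : s ≤ 2 ^ J := Nat.find_spec hex
    have hmem : u ∈ A J := hJ
    have key : (1 + s ^ 2) ^ (-(γ/2)) ≤ 2 ^ γ * x ^ J := by
      rcases Nat.eq_zero_or_pos J with h0 | hposJ
      · rw [h0, pow_zero, mul_one]
        have h1 : (1 + s ^ 2) ^ (-(γ/2)) ≤ 1 :=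
          Real.rpow_le_one_of_one_le_of_nonpos (by nlinarith [sq_nonneg s]) (by linarith)
        have h2 : (1:ℝ) ≤ 2 ^ γ := by
          have := Real.rpow_le_rpow_of_exponent_le one_le_two hγ0.le
          rwa [Real.rpow_zero] at this
        linarith
      · have hms : (2:ℝ) ^ (J - 1) < s := by
          have := Nat.find_min hex (Nat.pred_lt hposJ.ne')
          push_neg at this
          exact this
        have hs0' : 0 < s := lt_trans (by positivity) hms
        have step1 : (1 + s ^ 2) ^ (-(γ/2)) ≤ (s ^ 2) ^ (-(γ/2)) := by
          refine Real.rpow_le_rpow_of_nonpos (by positivity) (by nlinarith) (by linarith)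
        have step2 : (s ^ 2) ^ (-(γ/2)) = s ^ (-γ) := by
          rw [← Real.rpow_natCast s 2, ← Real.rpow_mul hs0]
          norm_num
          congr 1
          ring
        have step3 : s ^ (-γ) ≤ ((2:ℝ) ^ (J - 1)) ^ (-γ) :=
          Real.rpow_le_rpow_of_nonpos (by positivity) hms.le (by linarith)
        have step4 : ((2:ℝ) ^ (J - 1)) ^ (-γ) = 2 ^ γ * x ^ J := by
          rw [hxdef, ← Real.rpow_natCast (2:ℝ) (J-1), ← Real.rpow_mul (by norm_num : (0:ℝ) ≤ 2),
            ← Real.rpow_natCast ((2:ℝ) ^ (-γ)) J, ← Real.rpow_mul (by norm_num : (0:ℝ) ≤ 2),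
            ← Real.rpow_add two_pos]
          congr 1
          have : ((J - 1 : ℕ) : ℝ) = (J:ℝ) - 1 := by
            rw [Nat.cast_sub hposJ]; norm_num
          rw [this]; ring
        calc (1 + s ^ 2) ^ (-(γ/2)) ≤ (s ^ 2) ^ (-(γ/2)) := step1
        _ = s ^ (-γ) := step2
        _ ≤ ((2:ℝ) ^ (J - 1)) ^ (-γ) := step3
        _ = 2 ^ γ * x ^ J := step4
    calc ENNReal.ofReal ((1 + s ^ 2) ^ (-(γ/2)))
        ≤ (A J).indicator (fun _ => ENNReal.ofReal (2 ^ γ) * ENNReal.ofReal x ^ J) u := by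
          rw [Set.indicator_of_mem hmem, ← ENNReal.ofReal_pow hx0.le,
            ← ENNReal.ofReal_mul (by positivity)]
          exact ENNReal.ofReal_le_ofReal key
    _ ≤ _ := ENNReal.le_tsum J
  -- integrate
  have hterm : ∀ j : ℕ,
      (ENNReal.ofReal (2 ^ γ) * ENNReal.ofReal x ^ j) *
        ENNReal.ofReal (V * 2 ^ d * ((2:ℝ) ^ j / R) ^ (d - 1))
      = ENNReal.ofReal (2 ^ γ * (V2d * (1/R) ^ (d-1))) * (ENNReal.ofReal q) ^ j := by
    intro j
    rw [← ENNReal.ofReal_pow hx0.le, ← ENNReal.ofReal_mul (by positivity),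
      ← ENNReal.ofReal_mul (by positivity), ← ENNReal.ofReal_pow hq0.le,
      ← ENNReal.ofReal_mul (by positivity)]
    congr 1
    have hsplit : ((2:ℝ) ^ j / R) ^ (d - 1) = ((2:ℝ) ^ (d-1)) ^ j * (1/R) ^ (d-1) := by
      rw [div_eq_mul_one_div, mul_pow, pow_right_comm]
    rw [hsplit, hq_eq, mul_pow, hV2d]
    ring
  calc (∫⁻ u : Metric.sphere (0:Ed d) 1,
          ENNReal.ofReal ((1 + ‖R • (u:Ed d) - y‖ ^ 2) ^ (-(γ/2)))
          ∂(volume : Measure (Ed d)).toSphere)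
      ≤ ∫⁻ u, (∑' j : ℕ, (A j).indicator
            (fun _ => ENNReal.ofReal (2 ^ γ) * ENNReal.ofReal x ^ j) u)
          ∂(volume : Measure (Ed d)).toSphere := lintegral_mono hpt
  _ = ∑' j : ℕ, ∫⁻ u, (A j).indicator
            (fun _ => ENNReal.ofReal (2 ^ γ) * ENNReal.ofReal x ^ j) u
          ∂(volume : Measure (Ed d)).toSphere :=
        lintegral_tsum (fun j => (measurable_const.indicator (hAmeas j)).aemeasurable)
  _ = ∑' j : ℕ, (ENNReal.ofReal (2 ^ γ) * ENNReal.ofReal x ^ j) *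
          (volume : Measure (Ed d)).toSphere (A j) :=
        tsum_congr (fun j => lintegral_indicator_const (hAmeas j) _)
  _ ≤ ∑' j : ℕ, (ENNReal.ofReal (2 ^ γ) * ENNReal.ofReal x ^ j) *
          ENNReal.ofReal (V * 2 ^ d * ((2:ℝ) ^ j / R) ^ (d - 1)) :=
        ENNReal.tsum_le_tsum (fun j =>
          mul_le_mul_right (cap_bound hd hR (pow_pos two_pos j) y) _)
  _ = ∑' j : ℕ, ENNReal.ofReal (2 ^ γ * (V2d * (1/R) ^ (d-1))) * (ENNReal.ofReal q) ^ j :=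
        tsum_congr hterm
  _ = ENNReal.ofReal (2 ^ γ * (V2d * (1/R) ^ (d-1))) * (1 - ENNReal.ofReal q)⁻¹ := by
        rw [ENNReal.tsum_mul_left, ENNReal.tsum_geometric]
  _ = ENNReal.ofReal (2 ^ γ * (V2d * (1 - q)⁻¹) * (1/R) ^ (d-1)) := by
        rw [show (1:ℝ≥0∞) - ENNReal.ofReal q = ENNReal.ofReal (1 - q) by
            rw [ENNReal.ofReal_sub 1 hq0.le, ENNReal.ofReal_one],
          ← ENNReal.ofReal_inv_of_pos (by linarith),
          ← ENNReal.ofReal_mul (by positivity)]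
        congr 1
        ring

open Metric Set in
private lemma kernel_bound {d : ℕ} (hd : 2 ≤ d) {b γ : ℝ} (hb1 : -(d:ℝ) + 1 < b) (hb2 : b < 0)
    (hγ : (d:ℝ) - 1 < γ) :
    ∃ C₀ : ℝ, 0 < C₀ ∧ ∀ R : ℝ, 0 < R → ∀ y : Ed d, y ≠ 0 →
      (∫⁻ u : Metric.sphere (0:Ed d) 1,
          ENNReal.ofReal ((1 + ‖R • (u:Ed d) - y‖ ^ 2) ^ (-(γ/2)))
          ∂(volume : Measure (Ed d)).toSphere)
        ≤ ENNReal.ofReal (C₀ * R ^ (-((d:ℝ) - 1 + b)) * ‖y‖ ^ b) := by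
  classical
  obtain ⟨C₁, hC₁, hdy⟩ := sphere_int_bound hd hγ
  have hd1R : (1:ℝ) ≤ (d:ℝ) - 1 := by
    have : (2:ℝ) ≤ (d:ℝ) := by exact_mod_cast hd
    linarith
  have hγ0 : 0 < γ := by linarith
  set M : ℝ := ((volume : Measure (Ed d)).toSphere Set.univ).toReal with hMdef
  have hM0 : 0 ≤ M := ENNReal.toReal_nonneg
  have hMfin : (volume : Measure (Ed d)).toSphere Set.univ ≠ ∞ := measure_ne_top _ _
  set C₀ : ℝ := (C₁ + M) * 2 ^ (-b) with hC₀def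
  have h2b : (0:ℝ) < 2 ^ (-b) := Real.rpow_pos_of_pos two_pos _
  refine ⟨C₀, by positivity, ?_⟩
  intro R hR y hy
  set r : ℝ := ‖y‖ with hrdef
  have hr0 : 0 < r := norm_pos_iff.2 hy
  have hcast : ((d - 1 : ℕ) : ℝ) = (d:ℝ) - 1 := by
    rw [Nat.cast_sub (by omega)]; norm_num
  have hpow_eq : (1/R) ^ (d-1) = R ^ (-((d:ℝ) - 1)) := by
    rw [← hcast, Real.rpow_neg hR.le, Real.rpow_natCast, one_div, inv_pow]
  rcases le_or_gt r (2 * R) with hcase | hcase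
  · -- near case
    refine (hdy R hR y).trans (ENNReal.ofReal_le_ofReal ?_)
    rw [hpow_eq]
    have h1 : (2*R) ^ b ≤ r ^ b := Real.rpow_le_rpow_of_nonpos hr0 hcase hb2.le
    have h2 : (2*R) ^ b = 2 ^ b * R ^ b := Real.mul_rpow (by norm_num) hR.le
    have h3 : R ^ (-((d:ℝ) - 1 + b)) * R ^ b = R ^ (-((d:ℝ) - 1)) := by
      rw [← Real.rpow_add hR]
      congr 1
      ring
    have h4 : C₁ ≤ C₀ * 2 ^ b := by
      rw [hC₀def, mul_assoc, ← Real.rpow_add two_pos]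
      simp only [neg_add_cancel, Real.rpow_zero, mul_one]
      linarith
    calc C₁ * R ^ (-((d:ℝ) - 1)) ≤ (C₀ * 2 ^ b) * R ^ (-((d:ℝ) - 1)) :=
          mul_le_mul_of_nonneg_right h4 (Real.rpow_pos_of_pos hR _).le
    _ = C₀ * ((2*R) ^ b) * R ^ (-((d:ℝ) - 1 + b)) := by
          rw [h2, ← h3]; ring
    _ ≤ C₀ * r ^ b * R ^ (-((d:ℝ) - 1 + b)) := by
          apply mul_le_mul_of_nonneg_right _ (Real.rpow_pos_of_pos hR _).le
          exact mul_le_mul_of_nonneg_left h1 (by positivity)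
    _ = C₀ * R ^ (-((d:ℝ) - 1 + b)) * r ^ b := by ring
  · -- far case
    have hRr : R < r / 2 := by linarith
    have hpt : ∀ u : Metric.sphere (0:Ed d) 1,
        ENNReal.ofReal ((1 + ‖R • (u:Ed d) - y‖ ^ 2) ^ (-(γ/2)))
          ≤ ENNReal.ofReal ((1 + (r/2) ^ 2) ^ (-(γ/2))) := by
      intro u
      have hu1 : ‖(u : Ed d)‖ = 1 := norm_eq_of_mem_sphere u
      have hnorm : ‖R • (u:Ed d)‖ = R := by
        rw [norm_smul, hu1, Real.norm_eq_abs, abs_of_pos hR, mul_one]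
      have hs : r / 2 ≤ ‖R • (u:Ed d) - y‖ := by
        have h := norm_sub_norm_le y (R • (u:Ed d))
        rw [hnorm, ← norm_sub_rev] at h
        linarith
      apply ENNReal.ofReal_le_ofReal
      apply Real.rpow_le_rpow_of_nonpos (by positivity) _ (by linarith)
      nlinarith [norm_nonneg (R • (u:Ed d) - y)]
    calc (∫⁻ u : Metric.sphere (0:Ed d) 1,
            ENNReal.ofReal ((1 + ‖R • (u:Ed d) - y‖ ^ 2) ^ (-(γ/2)))
            ∂(volume : Measure (Ed d)).toSphere)
        ≤ ∫⁻ _u : Metric.sphere (0:Ed d) 1, ENNReal.ofReal ((1 + (r/2) ^ 2) ^ (-(γ/2)))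
            ∂(volume : Measure (Ed d)).toSphere := lintegral_mono hpt
    _ = ENNReal.ofReal ((1 + (r/2) ^ 2) ^ (-(γ/2))) *
            (volume : Measure (Ed d)).toSphere Set.univ := lintegral_const _
    _ = ENNReal.ofReal ((1 + (r/2) ^ 2) ^ (-(γ/2)) * M) := by
          rw [hMdef, ENNReal.ofReal_mul (by positivity), ENNReal.ofReal_toReal hMfin]
    _ ≤ ENNReal.ofReal (C₀ * R ^ (-((d:ℝ) - 1 + b)) * r ^ b) := by
          apply ENNReal.ofReal_le_ofReal
          -- real chain
          have hA : (1 + (r/2) ^ 2) ^ (-(γ/2)) ≤ (r/2) ^ (-((d:ℝ)-1)) := by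
            have e1 : (1 + (r/2) ^ 2) ^ (-(γ/2)) ≤ (1 + (r/2) ^ 2) ^ (-(((d:ℝ)-1)/2)) :=
              Real.rpow_le_rpow_of_exponent_le (by nlinarith) (by linarith)
            have e2 : (1 + (r/2) ^ 2) ^ (-(((d:ℝ)-1)/2)) ≤ ((r/2) ^ 2) ^ (-(((d:ℝ)-1)/2)) :=
              Real.rpow_le_rpow_of_nonpos (by positivity) (by nlinarith) (by linarith)
            have e3 : ((r/2) ^ 2) ^ (-(((d:ℝ)-1)/2)) = (r/2) ^ (-((d:ℝ)-1)) := by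
              rw [← Real.rpow_natCast (r/2) 2, ← Real.rpow_mul (by positivity)]
              norm_num
              congr 1
              ring
            calc _ ≤ _ := e1
            _ ≤ _ := e2
            _ = _ := e3
          have hB : (r/2) ^ (-((d:ℝ) - 1 + b)) ≤ R ^ (-((d:ℝ) - 1 + b)) := by
            apply Real.rpow_le_rpow_of_nonpos hR (by linarith) (by linarith)
          have hsplit : (r/2) ^ (-((d:ℝ) - 1 + b)) * r ^ b = 2 ^ b * (r/2) ^ (-((d:ℝ)-1)) := by
            have hr2 : (0:ℝ) < r / 2 := by linarith
            have : r ^ b = (r/2) ^ b * 2 ^ b := by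
              rw [← Real.mul_rpow hr2.le (by norm_num)]
              norm_num
            rw [this, show (r/2) ^ (-((d:ℝ) - 1 + b)) * ((r/2) ^ b * 2 ^ b)
                = ((r/2) ^ (-((d:ℝ) - 1 + b)) * (r/2) ^ b) * 2 ^ b by ring,
              ← Real.rpow_add hr2, show -((d:ℝ) - 1 + b) + b = -((d:ℝ)-1) by ring]
            ring
          have hC₀2b : M ≤ C₀ * 2 ^ b := by
            rw [hC₀def, mul_assoc, ← Real.rpow_add two_pos]
            simp only [neg_add_cancel, Real.rpow_zero, mul_one]
            linarith
          calc (1 + (r/2) ^ 2) ^ (-(γ/2)) * M ≤ (r/2) ^ (-((d:ℝ)-1)) * (C₀ * 2 ^ b) := by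
                apply mul_le_mul hA hC₀2b hM0 (by positivity)
          _ = C₀ * ((r/2) ^ (-((d:ℝ) - 1 + b)) * r ^ b) := by rw [hsplit]; ring
          _ ≤ C₀ * (R ^ (-((d:ℝ) - 1 + b)) * r ^ b) := by
                apply mul_le_mul_of_nonneg_left _ (by positivity)
                apply mul_le_mul_of_nonneg_right hB (Real.rpow_pos_of_pos hr0 _).le
          _ = C₀ * R ^ (-((d:ℝ) - 1 + b)) * r ^ b := by ring


/-- Lemma `l.dN1`: weighted convolution estimate against the kernel
`(1+|x-y|²)^{-γ/2}` for radial `f`. -/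
theorem statement14 (d : ℕ) (hd : 2 ≤ d) (b γ : ℝ)
    (hb1 : -(d : ℝ) + 1 < b) (hb2 : b < 0) (hγ : (d : ℝ) - 1 < γ) :
    ∃ C : ℝ, 0 < C ∧
      ∀ f : Ed d → ℝ, AEStronglyMeasurable f volume →
        (∀ x y : Ed d, ‖x‖ = ‖y‖ → f x = f y) →
        Integrable (fun y : Ed d => ‖y‖ ^ b * |f y|) volume →
        ∀ x : Ed d, x ≠ 0 →
          |∫ y : Ed d, f y * (1 + ‖x - y‖ ^ 2) ^ (-(γ / 2))| ≤
            C * ‖x‖ ^ (-((d : ℝ) - 1 + b)) * ∫ y : Ed d, ‖y‖ ^ b * |f y| := by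
  classical
  obtain ⟨C₀, hC₀, hker⟩ := kernel_bound hd hb1 hb2 hγ
  set μS := (volume : Measure (Ed d)).toSphere with hμS
  set m : ℝ≥0∞ := μS Set.univ with hm
  have hdpos : 0 < d := by omega
  haveI : Nonempty (Fin d) := ⟨⟨0, hdpos⟩⟩
  have hm0 : m ≠ 0 := by
    rw [hm, hμS, Measure.toSphere_apply_univ, finrank_euclideanSpace_fin]
    refine mul_ne_zero (by exact_mod_cast hdpos.ne') ?_
    exact (Metric.measure_ball_pos volume (0:Ed d) one_pos).ne'
  have hmtop : m ≠ ∞ := measure_ne_top _ _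
  have hMpos : 0 < m.toReal := ENNReal.toReal_pos hm0 hmtop
  refine ⟨C₀ / m.toReal, by positivity, ?_⟩
  intro f hmeas hrad hint x hx
  set R : ℝ := ‖x‖ with hRdef
  have hR : 0 < R := norm_pos_iff.2 hx
  set kk : Ed d → Ed d → ℝ≥0∞ :=
    fun z y => ENNReal.ofReal ((1 + ‖z - y‖ ^ 2) ^ (-(γ/2))) with hkk
  set Φ : Ed d → ℝ≥0∞ := fun z => ∫⁻ y, ENNReal.ofReal |f y| * kk z y with hΦ
  -- Step 0: kernel positivity facts
  have hkpos : ∀ z y : Ed d, (0:ℝ) ≤ (1 + ‖z - y‖ ^ 2) ^ (-(γ/2)) := by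
    intro z y
    positivity
  -- Step 1: |∫ f y * K| ≤ (Φ x).toReal
  have hstep1 : |∫ y : Ed d, f y * (1 + ‖x - y‖ ^ 2) ^ (-(γ / 2))| ≤ (Φ x).toReal := by
    have := norm_integral_le_lintegral_norm (μ := volume)
      (fun y : Ed d => f y * (1 + ‖x - y‖ ^ 2) ^ (-(γ / 2)))
    rw [Real.norm_eq_abs] at this
    refine this.trans_eq ?_
    congr 1
    refine lintegral_congr fun y => ?_
    rw [Real.norm_eq_abs, abs_mul, abs_of_nonneg (hkpos x y),
      ENNReal.ofReal_mul (abs_nonneg _)]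
  -- Step 2: radial invariance of Φ
  have hradial : ∀ z : Ed d, ‖z‖ = ‖x‖ → Φ z = Φ x := by
    intro z hz
    obtain ⟨e, he⟩ := exists_iso hz
    have hmp : MeasurePreserving (⇑e) (volume : Measure (Ed d)) volume :=
      e.measurePreserving
    have heq : ∀ y : Ed d, ENNReal.ofReal |f (e y)| * kk x (e y)
        = ENNReal.ofReal |f y| * kk z y := by
      intro y
      have h1 : f (e y) = f y := hrad _ _ (e.norm_map y)
      have h2 : ‖x - e y‖ = ‖z - y‖ := by
        calc ‖x - e y‖ = ‖e z - e y‖ := by rw [he]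
        _ = ‖e (z - y)‖ := by rw [map_sub]
        _ = ‖z - y‖ := e.norm_map _
      simp only [hkk, h1, h2]
    calc Φ z = ∫⁻ y, ENNReal.ofReal |f y| * kk z y := rfl
    _ = ∫⁻ y, ENNReal.ofReal |f (e y)| * kk x (e y) := by
        exact lintegral_congr fun y => (heq y).symm
    _ = ∫⁻ y, ENNReal.ofReal |f y| * kk x y :=
        (hmp.lintegral_map_equiv (fun w => ENNReal.ofReal |f w| * kk x w)
          e.toHomeomorph.toMeasurableEquiv).symm
    _ = Φ x := rfl
  -- measurable representative
  set f' : Ed d → ℝ := hmeas.mk f with hf'def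
  have hf'meas : Measurable f' := hmeas.stronglyMeasurable_mk.measurable
  have hff' : f =ᵐ[volume] f' := hmeas.ae_eq_mk
  set g' : Ed d → ℝ≥0∞ := fun y => ENNReal.ofReal |f' y| with hg'
  have hg'meas : Measurable g' := (hf'meas.abs).ennreal_ofReal
  have hcongr : ∀ z : Ed d, Φ z = ∫⁻ y, g' y * kk z y := by
    intro z
    refine lintegral_congr_ae ?_
    filter_upwards [hff'] with y hy
    simp only [hg', hy]
  -- joint measurability
  have hjoint : Measurable fun p : Metric.sphere (0:Ed d) 1 × Ed d =>
      g' p.2 * kk (R • (p.1 : Ed d)) p.2 := by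
    apply Measurable.fun_mul
    · exact hg'meas.comp measurable_snd
    · have hcont : Continuous fun p : Metric.sphere (0:Ed d) 1 × Ed d =>
          (1 + ‖R • (p.1 : Ed d) - p.2‖ ^ 2) := by fun_prop
      have hcont2 : Continuous fun p : Metric.sphere (0:Ed d) 1 × Ed d =>
          (1 + ‖R • (p.1 : Ed d) - p.2‖ ^ 2) ^ (-(γ/2)) := by
        apply hcont.rpow_const
        intro p
        left
        positivity
      exact (ENNReal.continuous_ofReal.comp hcont2).measurable
  -- Step 3+4: averaging + Tonelli
  have hmain : m * Φ x = ∫⁻ y, g' y *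
      (∫⁻ u : Metric.sphere (0:Ed d) 1, kk (R • (u : Ed d)) y ∂μS) := by
    calc m * Φ x = Φ x * m := mul_comm _ _
    _ = ∫⁻ _u : Metric.sphere (0:Ed d) 1, Φ x ∂μS := (lintegral_const _).symm
    _ = ∫⁻ u : Metric.sphere (0:Ed d) 1, ∫⁻ y, g' y * kk (R • (u : Ed d)) y ∂volume ∂μS := by
        refine lintegral_congr fun u => ?_
        have hnorm : ‖R • (u : Ed d)‖ = ‖x‖ := by
          rw [norm_smul, norm_eq_of_mem_sphere u, Real.norm_eq_abs, abs_of_pos hR, mul_one]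
        rw [← hcongr (R • (u : Ed d)), hradial _ hnorm]
    _ = ∫⁻ y, ∫⁻ u : Metric.sphere (0:Ed d) 1, g' y * kk (R • (u : Ed d)) y ∂μS ∂volume :=
        lintegral_lintegral_swap hjoint.aemeasurable
    _ = _ := by
        refine lintegral_congr fun y => ?_
        exact lintegral_const_mul' _ _ ENNReal.ofReal_ne_top
  -- Step 5: apply kernel bound
  set W : ℝ := ∫ y : Ed d, ‖y‖ ^ b * |f y| with hW
  have hW0 : 0 ≤ W := integral_nonneg fun y => by positivity
  have hbound : m * Φ x ≤ ENNReal.ofReal (C₀ * R ^ (-((d:ℝ) - 1 + b))) * ENNReal.ofReal W := by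
    rw [hmain]
    have hae : ∀ᵐ y : Ed d ∂volume, y ≠ 0 := by
      rw [ae_iff]
      simpa using measure_singleton (0 : Ed d)
    calc (∫⁻ y, g' y * (∫⁻ u : Metric.sphere (0:Ed d) 1, kk (R • (u : Ed d)) y ∂μS))
        ≤ ∫⁻ y, ENNReal.ofReal (C₀ * R ^ (-((d:ℝ) - 1 + b))) *
            (ENNReal.ofReal (‖y‖ ^ b) * g' y) := by
          refine lintegral_mono_ae ?_
          filter_upwards [hae] with y hy
          calc g' y * (∫⁻ u : Metric.sphere (0:Ed d) 1, kk (R • (u : Ed d)) y ∂μS)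
              ≤ g' y * ENNReal.ofReal (C₀ * R ^ (-((d:ℝ) - 1 + b)) * ‖y‖ ^ b) :=
                mul_le_mul_right (hker R hR y hy) _
          _ = ENNReal.ofReal (C₀ * R ^ (-((d:ℝ) - 1 + b))) *
                (ENNReal.ofReal (‖y‖ ^ b) * g' y) := by
              rw [ENNReal.ofReal_mul (by positivity)]
              ring
    _ = ENNReal.ofReal (C₀ * R ^ (-((d:ℝ) - 1 + b))) *
          ∫⁻ y, ENNReal.ofReal (‖y‖ ^ b) * g' y :=
        lintegral_const_mul' _ _ ENNReal.ofReal_ne_top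
    _ = ENNReal.ofReal (C₀ * R ^ (-((d:ℝ) - 1 + b))) * ENNReal.ofReal W := by
        congr 1
        have heq2 : ∫⁻ y : Ed d, ENNReal.ofReal (‖y‖ ^ b) * g' y
            = ∫⁻ y : Ed d, ENNReal.ofReal (‖y‖ ^ b * |f y|) := by
          refine lintegral_congr_ae ?_
          filter_upwards [hff'] with y hy
          simp only [hg', ENNReal.ofReal_mul (by positivity : (0:ℝ) ≤ ‖y‖ ^ b), hy]
        rw [heq2, hW, ← MeasureTheory.ofReal_integral_eq_lintegral_ofReal hint
          (Eventually.of_forall fun y => by positivity)]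
  -- endgame
  have hΦle : Φ x ≤ m⁻¹ * (ENNReal.ofReal (C₀ * R ^ (-((d:ℝ) - 1 + b))) * ENNReal.ofReal W) := by
    calc Φ x = m⁻¹ * (m * Φ x) := by
          rw [← mul_assoc, ENNReal.inv_mul_cancel hm0 hmtop, one_mul]
    _ ≤ _ := mul_le_mul_right hbound _
  have hfin : m⁻¹ * (ENNReal.ofReal (C₀ * R ^ (-((d:ℝ) - 1 + b))) * ENNReal.ofReal W) ≠ ∞ :=
    ENNReal.mul_ne_top (ENNReal.inv_ne_top.2 hm0)
      (ENNReal.mul_ne_top ENNReal.ofReal_ne_top ENNReal.ofReal_ne_top)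
  have hmono := ENNReal.toReal_mono hfin hΦle
  calc |∫ y : Ed d, f y * (1 + ‖x - y‖ ^ 2) ^ (-(γ / 2))| ≤ (Φ x).toReal := hstep1
  _ ≤ (m⁻¹ * (ENNReal.ofReal (C₀ * R ^ (-((d:ℝ) - 1 + b))) * ENNReal.ofReal W)).toReal := hmono
  _ = C₀ / m.toReal * R ^ (-((d:ℝ) - 1 + b)) * W := by
      rw [ENNReal.toReal_mul, ENNReal.toReal_mul, ENNReal.toReal_inv,
        ENNReal.toReal_ofReal (by positivity), ENNReal.toReal_ofReal hW0]
      field_simp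

end
end
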